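/- Let α, β, γ ∈ (0,5), ζ ∈ (0, min(α,β)] and η ∈ (0, min(α',β')] (with α', β' ∈ (0,5)) satisfy α+β−5 < ζ, α'+β'−5 < η, and α+β+α'+β'+γ−10 < ζ+η. Then the iterated convolution-type integral ∫∫ ‖z'−u‖_s^{-α} ‖w'−u‖_s^{-β} ‖u−v‖_s^{-γ} ‖z''−v‖_s^{-α'} ‖w''−v‖_s^{-β'} du dv over (compactly supported kernels in) R^4 × R^4 is bounded by a constant times ‖z'−w'‖_s^{-ζ} ‖z''−w''‖_s^{-η}, where ‖(t,x)‖_s = |t|^{1/2} + |x_1| + |x_2| + |x_3| is the parabolic norm on R^4. -/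

import Mathlib

open MeasureTheory
open scoped ENNReal

noncomputable section

/-- The parabolic norm `‖(t,x)‖_s = |t|^{1/2} + |x₁| + |x₂| + |x₃|` on `ℝ⁴ = ℝ × ℝ³`. -/
def pnorm (z : ℝ × (Fin 3 → ℝ)) : ℝ := Real.sqrt |z.1| + ∑ i, |z.2 i|

/-- The compactly supported singular kernel `‖a - b‖_s^{-α} 1_{‖a-b‖_s ≤ 1}`. -/
def sker (α : ℝ) (a b : ℝ × (Fin 3 → ℝ)) : ℝ≥0∞ :=
  if pnorm (a - b) ≤ 1 then (ENNReal.ofReal (pnorm (a - b))) ^ (-α) else 0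

abbrev E : Type := ℝ × (Fin 3 → ℝ)

lemma pnorm_nonneg (z : E) : 0 ≤ pnorm z := by
  unfold pnorm; positivity

lemma pnorm_neg (z : E) : pnorm (-z) = pnorm z := by
  simp [pnorm, abs_neg]

lemma pnorm_sub_rev (a b : E) : pnorm (a - b) = pnorm (b - a) := by
  rw [← pnorm_neg (a - b), neg_sub]

lemma pnorm_zero : pnorm (0 : E) = 0 := by simp [pnorm]

lemma sqrt_add_le' {x y : ℝ} (hx : 0 ≤ x) (hy : 0 ≤ y) :
    Real.sqrt (x + y) ≤ Real.sqrt x + Real.sqrt y := by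
  have h2 : x + y ≤ (Real.sqrt x + Real.sqrt y) ^ 2 := by
    rw [add_sq, Real.sq_sqrt hx, Real.sq_sqrt hy]
    nlinarith [Real.sqrt_nonneg x, Real.sqrt_nonneg y]
  calc Real.sqrt (x + y) ≤ Real.sqrt ((Real.sqrt x + Real.sqrt y) ^ 2) :=
        Real.sqrt_le_sqrt h2
    _ = _ := Real.sqrt_sq (by positivity)

lemma pnorm_add_le (a b : E) : pnorm (a + b) ≤ pnorm a + pnorm b := by
  have h1 : Real.sqrt |(a + b).1| ≤ Real.sqrt |a.1| + Real.sqrt |b.1| := by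
    refine le_trans (Real.sqrt_le_sqrt ?_) (sqrt_add_le' (abs_nonneg _) (abs_nonneg _))
    exact abs_add_le _ _
  have h2 : ∑ i, |(a + b).2 i| ≤ (∑ i, |a.2 i|) + ∑ i, |b.2 i| := by
    rw [← Finset.sum_add_distrib]
    exact Finset.sum_le_sum fun i _ => abs_add_le _ _
  unfold pnorm; linarith

lemma pnorm_tri (a b c : E) : pnorm (a - c) ≤ pnorm (a - b) + pnorm (b - c) := by
  simpa using pnorm_add_le (a - b) (b - c)

lemma eq_zero_of_pnorm_eq_zero {z : E} (h : pnorm z = 0) : z = 0 := by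
  have hs : 0 ≤ Real.sqrt |z.1| := Real.sqrt_nonneg _
  have hsum : 0 ≤ ∑ i, |z.2 i| := Finset.sum_nonneg fun i _ => abs_nonneg _
  unfold pnorm at h
  have h1 : Real.sqrt |z.1| = 0 := by linarith
  have h2 : ∑ i, |z.2 i| = 0 := by linarith
  have hz1 : z.1 = 0 := by
    have := (Real.sqrt_eq_zero (abs_nonneg _)).mp h1
    exact abs_eq_zero.mp this
  have hz2 : ∀ i, z.2 i = 0 := by
    intro i
    have := (Finset.sum_eq_zero_iff_of_nonneg (fun i _ => abs_nonneg (z.2 i))).mp h2 i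
      (Finset.mem_univ i)
    exact abs_eq_zero.mp this
  exact Prod.ext hz1 (funext hz2)

lemma continuous_pnorm : Continuous pnorm := by
  unfold pnorm
  exact (Real.continuous_sqrt.comp (continuous_abs.comp continuous_fst)).add
    (continuous_finset_sum _ fun i _ =>
      continuous_abs.comp ((continuous_apply i).comp continuous_snd))

set_option maxHeartbeats 1000000 in
lemma measurable_sker2 (δ : ℝ) : Measurable (fun p : E × E => sker δ p.1 p.2) := by
  unfold sker
  have hc : Continuous fun p : E × E => pnorm (p.1 - p.2) :=
    continuous_pnorm.comp (continuous_fst.sub continuous_snd)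
  refine Measurable.ite (measurableSet_le hc.measurable measurable_const) ?_ measurable_const
  exact ENNReal.continuous_rpow_const.measurable.comp
    (ENNReal.measurable_ofReal.comp hc.measurable)

set_option maxHeartbeats 1000000 in
lemma measurable_sker (δ : ℝ) (a : E) : Measurable (sker δ a) := by
  have h := (measurable_sker2 δ).comp (measurable_prodMk_left (x := a))
  exact h

lemma sker_comm (δ : ℝ) (a b : E) : sker δ a b = sker δ b a := by
  unfold sker; rw [pnorm_sub_rev]

lemma sker_pos {δ : ℝ} (hδ : 0 < δ) (a b : E) (h : pnorm (a - b) ≤ 1) : 0 < sker δ a b := by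
  unfold sker
  rw [if_pos h]
  rcases eq_or_lt_of_le (pnorm_nonneg (a - b)) with h0 | h0
  · rw [← h0, ENNReal.ofReal_zero, ENNReal.zero_rpow_of_neg (by linarith)]
    norm_num
  · exact ENNReal.rpow_pos (ENNReal.ofReal_pos.mpr h0) ENNReal.ofReal_ne_top

lemma sker_eq_top {δ : ℝ} (hδ : 0 < δ) (a : E) : sker δ a a = ⊤ := by
  unfold sker
  simp only [sub_self, pnorm_zero]
  rw [if_pos (by norm_num), ENNReal.ofReal_zero, ENNReal.zero_rpow_of_neg (by linarith)]

/-- antitonicity of negative powers -/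
lemma rpow_neg_anti {a b : ℝ≥0∞} (hab : a ≤ b) {r : ℝ} (hr : 0 ≤ r) :
    b ^ (-r) ≤ a ^ (-r) := by
  rw [ENNReal.rpow_neg, ENNReal.rpow_neg]
  exact ENNReal.inv_le_inv.mpr (ENNReal.rpow_le_rpow hab hr)

def Ibound (δ : ℝ) : ℝ≥0∞ := ∫⁻ u : E, sker δ 0 u

lemma sker_translate (δ : ℝ) (x u : E) : sker δ x u = sker δ 0 (u - x) := by
  unfold sker
  rw [zero_sub, neg_sub]

instance : (volume : Measure E).IsAddRightInvariant := by
  rw [show (volume : Measure E) = (volume : Measure ℝ).prod volume from rfl]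
  infer_instance

lemma lintegral_sker (δ : ℝ) (x : E) : ∫⁻ u : E, sker δ x u = Ibound δ := by
  simp_rw [sker_translate δ x]
  exact lintegral_sub_right_eq_self (fun u => sker δ 0 u) x

lemma volume_pball_le {r : ℝ} (hr : 0 ≤ r) :
    volume {u : E | pnorm u ≤ r} ≤ ENNReal.ofReal (16 * r ^ 5) := by
  have hsub : {u : E | pnorm u ≤ r} ⊆
      (Set.Icc (-(r ^ 2)) (r ^ 2)) ×ˢ (Set.pi Set.univ fun _ : Fin 3 => Set.Icc (-r) r) := by
    intro u hu
    simp only [Set.mem_setOf_eq] at hu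
    have hs : 0 ≤ Real.sqrt |u.1| := Real.sqrt_nonneg _
    have hsum : 0 ≤ ∑ i, |u.2 i| := Finset.sum_nonneg fun i _ => abs_nonneg _
    have hsqrt : Real.sqrt |u.1| ≤ r := by unfold pnorm at hu; linarith
    have h1 : |u.1| ≤ r ^ 2 := by
      have h := Real.sq_sqrt (abs_nonneg u.1)
      nlinarith
    have h2 : ∀ i, |u.2 i| ≤ r := by
      intro i
      have hle : |u.2 i| ≤ ∑ j, |u.2 j| :=
        Finset.single_le_sum (f := fun j => |u.2 j|) (fun j _ => abs_nonneg _)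
          (Finset.mem_univ i)
      unfold pnorm at hu; linarith
    refine ⟨?_, ?_⟩
    · exact Set.mem_Icc.mpr (abs_le.mp h1)
    · intro i _
      exact Set.mem_Icc.mpr (abs_le.mp (h2 i))
  refine le_trans (measure_mono hsub) ?_
  rw [show (volume : Measure E) = (volume : Measure ℝ).prod volume from rfl,
    Measure.prod_prod, volume_pi_pi, Real.volume_Icc]
  simp only [Real.volume_Icc]
  have : ∏ _i : Fin 3, ENNReal.ofReal (r - -r) = (ENNReal.ofReal (r - -r)) ^ 3 := by
    simp [Finset.prod_const]
  rw [this, show r ^ 2 - -r ^ 2 = 2 * r ^ 2 by ring, show r - -r = 2 * r by ring,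
    ← ENNReal.ofReal_pow (by positivity), ← ENNReal.ofReal_mul (by positivity)]
  exact ENNReal.ofReal_le_ofReal (by nlinarith)

lemma Ibound_lt_top {δ : ℝ} (h0 : 0 < δ) (h5 : δ < 5) : Ibound δ < ⊤ := by
  classical
  set c : ℝ≥0∞ := ENNReal.ofReal (2 ^ δ) with hc
  set B : ℕ → Set E := fun n => {u : E | pnorm u ≤ (2 : ℝ)⁻¹ ^ n} with hB
  have hBmeas : ∀ n, MeasurableSet (B n) := fun n =>
    measurableSet_le continuous_pnorm.measurable measurable_const
  have hpt : ∀ u : E, sker δ 0 u ≤ ∑' n : ℕ, (B n).indicator (fun _ => c ^ (n + 1)) u := by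
    intro u
    rw [sker, zero_sub, pnorm_neg]
    split_ifs with h1
    · rcases eq_or_lt_of_le (pnorm_nonneg u) with hp0 | hp0
      · -- pnorm u = 0, RHS = ⊤
        have hmem : ∀ n, u ∈ B n := fun n => by
          simp only [hB, Set.mem_setOf_eq, ← hp0]
          positivity
        have hone : ∀ n : ℕ, (1 : ℝ≥0∞) ≤ (B n).indicator (fun _ => c ^ (n + 1)) u := by
          intro n
          rw [Set.indicator_of_mem (hmem n)]
          refine one_le_pow₀ ?_
          rw [hc]
          exact ENNReal.one_le_ofReal.mpr (Real.one_le_rpow one_le_two h0.le)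
        have htop : (⊤ : ℝ≥0∞) ≤ ∑' n : ℕ, (B n).indicator (fun _ => c ^ (n + 1)) u := by
          calc (⊤ : ℝ≥0∞) = ∑' _ : ℕ, (1 : ℝ≥0∞) :=
                (ENNReal.tsum_const_eq_top_of_ne_zero one_ne_zero).symm
            _ ≤ _ := ENNReal.tsum_le_tsum hone
        exact le_trans le_top htop
      · -- 0 < pnorm u ≤ 1
        have hPex : ∃ n : ℕ, (2 : ℝ)⁻¹ ^ (n + 1) < pnorm u := by
          obtain ⟨N, hN⟩ := exists_pow_lt_of_lt_one hp0 (by norm_num : (2 : ℝ)⁻¹ < 1)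
          exact ⟨N, lt_of_le_of_lt
            (pow_le_pow_of_le_one (by norm_num) (by norm_num) (Nat.le_succ N)) hN⟩
        set n := Nat.find hPex with hn
        have hn1 : (2 : ℝ)⁻¹ ^ (n + 1) < pnorm u := Nat.find_spec hPex
        have hn2 : pnorm u ≤ (2 : ℝ)⁻¹ ^ n := by
          rcases Nat.eq_zero_or_pos n with h | h
          · rw [h, pow_zero]; exact h1
          · have hlt : n - 1 < Nat.find hPex := by
              rw [← hn]; exact Nat.sub_lt h one_pos
            have := Nat.find_min hPex hlt
            rw [Nat.sub_add_cancel h] at this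
            exact not_lt.mp this
        have hmem : u ∈ B n := by simp only [hB, Set.mem_setOf_eq]; exact hn2
        refine le_trans ?_ (ENNReal.le_tsum n)
        rw [Set.indicator_of_mem hmem]
        have step1 : (ENNReal.ofReal (pnorm u)) ^ (-δ) ≤
            (ENNReal.ofReal ((2 : ℝ)⁻¹ ^ (n + 1))) ^ (-δ) :=
          rpow_neg_anti (ENNReal.ofReal_le_ofReal hn1.le) h0.le
        have step2 : (ENNReal.ofReal ((2 : ℝ)⁻¹ ^ (n + 1))) ^ (-δ) = c ^ (n + 1) := by
          rw [ENNReal.ofReal_rpow_of_pos (by positivity)]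
          have hreal : ((2 : ℝ)⁻¹ ^ (n + 1)) ^ (-δ) = ((2 : ℝ) ^ δ) ^ (n + 1) := by
            have e1 : ((2 : ℝ)⁻¹ ^ (n + 1)) = (2 : ℝ) ^ (-((n + 1 : ℕ) : ℝ)) := by
              rw [inv_pow, ← Real.rpow_natCast (2 : ℝ) (n + 1),
                ← Real.rpow_neg (by norm_num : (0:ℝ) ≤ 2)]
            rw [e1, ← Real.rpow_natCast ((2 : ℝ) ^ δ) (n + 1),
              ← Real.rpow_mul (by norm_num : (0:ℝ) ≤ 2),
              ← Real.rpow_mul (by norm_num : (0:ℝ) ≤ 2)]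
            congr 1
            ring
          rw [hreal, ENNReal.ofReal_pow (by positivity), hc]
        rw [← step2]
        exact step1
    · exact zero_le
  have hvol : ∀ n : ℕ, volume (B n) ≤ ENNReal.ofReal (16 * ((2 : ℝ)⁻¹ ^ n) ^ 5) := fun n =>
    volume_pball_le (by positivity)
  set k : ℝ≥0∞ := ENNReal.ofReal ((2 : ℝ)⁻¹ ^ 5) with hk
  have hq1 : c * k < 1 := by
    rw [hc, hk, ← ENNReal.ofReal_mul (by positivity)]
    refine ENNReal.ofReal_lt_one.mpr ?_
    have h2δ : (2 : ℝ) ^ δ < 2 ^ (5 : ℝ) :=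
      Real.rpow_lt_rpow_of_exponent_lt one_lt_two h5
    have h25 : (2 : ℝ) ^ (5 : ℝ) = 32 := by
      rw [show (5 : ℝ) = ((5 : ℕ) : ℝ) by norm_num, Real.rpow_natCast]
      norm_num
    rw [h25] at h2δ
    nlinarith
  calc Ibound δ ≤ ∫⁻ u : E, ∑' n : ℕ, (B n).indicator (fun _ => c ^ (n + 1)) u :=
        lintegral_mono hpt
    _ = ∑' n : ℕ, ∫⁻ u : E, (B n).indicator (fun _ => c ^ (n + 1)) u :=
        lintegral_tsum fun n => (measurable_const.indicator (hBmeas n)).aemeasurable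
    _ = ∑' n : ℕ, c ^ (n + 1) * volume (B n) := by
        refine tsum_congr fun n => ?_
        rw [lintegral_indicator (hBmeas n), setLIntegral_const]
    _ ≤ ∑' n : ℕ, (ENNReal.ofReal 16 * c) * (c * k) ^ n := by
        refine ENNReal.tsum_le_tsum fun n => ?_
        refine le_trans (mul_le_mul_right (hvol n) _) (le_of_eq ?_)
        have h1 : ((2 : ℝ)⁻¹ ^ n) ^ 5 = ((2 : ℝ)⁻¹ ^ 5) ^ n := by
          rw [← pow_mul, ← pow_mul, Nat.mul_comm]
        rw [h1, ENNReal.ofReal_mul (by norm_num), ENNReal.ofReal_pow (by positivity), ← hk]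
        ring
    _ = (ENNReal.ofReal 16 * c) * ∑' n : ℕ, (c * k) ^ n := ENNReal.tsum_mul_left
    _ < ⊤ := by
        rw [ENNReal.tsum_geometric]
        refine ENNReal.mul_lt_top (ENNReal.mul_lt_top ENNReal.ofReal_lt_top ?_) ?_
        · rw [hc]; exact ENNReal.ofReal_lt_top
        · exact ENNReal.inv_lt_top.mpr (tsub_pos_of_lt hq1)

lemma ofReal_rpow_pos {x : ℝ} {y : ℝ} (hx : 0 < x) : (0:ℝ≥0∞) < ENNReal.ofReal x ^ y :=
  ENNReal.rpow_pos (ENNReal.ofReal_pos.mpr hx) ENNReal.ofReal_ne_top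

/-- Auxiliary: extraction in the case `pnorm (w-u) ≤ pnorm (z-u)`. -/
lemma sker_mul_le_aux {p q ρ : ℝ} (hρ : 0 < ρ) (hp : ρ ≤ p) (hq : 0 < q) (z w u : E)
    (hP : 0 < pnorm (z - w)) (hle : pnorm (w - u) ≤ pnorm (z - u)) :
    sker p z u * sker q w u ≤
      ENNReal.ofReal (2 ^ ρ) * (ENNReal.ofReal (pnorm (z - w))) ^ (-ρ) *
        sker (p + q - ρ) w u := by
  have hpq : 0 < p + q - ρ := by linarith
  unfold sker
  by_cases hw1 : pnorm (w - u) ≤ 1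
  · by_cases hz1 : pnorm (z - u) ≤ 1
    · rw [if_pos hw1, if_pos hz1, if_pos hw1]
      set a := pnorm (z - u) with ha
      set b := pnorm (w - u) with hb
      rcases eq_or_lt_of_le (pnorm_nonneg (w - u)) with hb0 | hb0
      · -- b = 0 : RHS = ⊤
        have hb' : b = 0 := by rw [hb, ← hb0]
        rw [hb', ENNReal.ofReal_zero,
          ENNReal.zero_rpow_of_neg (show -(p + q - ρ) < 0 by linarith)]
        rw [ENNReal.mul_top (mul_ne_zero (ne_of_gt (ENNReal.ofReal_pos.mpr (by positivity)))
          (ne_of_gt (ofReal_rpow_pos hP)))]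
        exact le_top
      · have ha0 : 0 < a := lt_of_lt_of_le hb0 hle
        have htri : pnorm (z - w) ≤ a + b := by
          have := pnorm_tri z u w
          rw [← ha] at this
          rw [pnorm_sub_rev u w, ← hb] at this
          exact this
        have hPa : pnorm (z - w) ≤ 2 * a := by linarith
        -- real inequality
        have hreal : a ^ (-p) * b ^ (-q) ≤
            2 ^ ρ * (pnorm (z - w)) ^ (-ρ) * b ^ (-(p + q - ρ)) := by
          have e1 : a ^ (-p) = a ^ (-ρ) * a ^ (ρ - p) := by
            rw [← Real.rpow_add ha0]; congr 1; ring
          have i1 : a ^ (-ρ) ≤ (pnorm (z - w) / 2) ^ (-ρ) := by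
            refine Real.rpow_le_rpow_of_nonpos (by positivity) (by linarith) (by linarith)
          have i2 : a ^ (ρ - p) ≤ b ^ (ρ - p) :=
            Real.rpow_le_rpow_of_nonpos hb0 hle (by linarith)
          have e2 : (pnorm (z - w) / 2) ^ (-ρ) = 2 ^ ρ * (pnorm (z - w)) ^ (-ρ) := by
            rw [Real.div_rpow (by positivity) (by norm_num), Real.rpow_neg hP.le,
              Real.rpow_neg (by norm_num : (0:ℝ) ≤ 2), div_eq_mul_inv, inv_inv]
            ring
          have e3 : b ^ (ρ - p) * b ^ (-q) = b ^ (-(p + q - ρ)) := by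
            rw [← Real.rpow_add hb0]; congr 1; ring
          calc a ^ (-p) * b ^ (-q) = a ^ (-ρ) * a ^ (ρ - p) * b ^ (-q) := by rw [← e1]
            _ ≤ (pnorm (z - w) / 2) ^ (-ρ) * b ^ (ρ - p) * b ^ (-q) := by
                refine mul_le_mul ?_ (le_refl _) (by positivity) (by positivity)
                exact mul_le_mul i1 i2 (by positivity) (by positivity)
            _ = 2 ^ ρ * (pnorm (z - w)) ^ (-ρ) * (b ^ (ρ - p) * b ^ (-q)) := by
                rw [e2]; ring
            _ = 2 ^ ρ * (pnorm (z - w)) ^ (-ρ) * b ^ (-(p + q - ρ)) := by rw [e3]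
        -- transfer to ENNReal
        calc ENNReal.ofReal a ^ (-p) * ENNReal.ofReal b ^ (-q)
            = ENNReal.ofReal (a ^ (-p) * b ^ (-q)) := by
              rw [ENNReal.ofReal_rpow_of_pos ha0, ENNReal.ofReal_rpow_of_pos hb0,
                ← ENNReal.ofReal_mul (by positivity)]
          _ ≤ ENNReal.ofReal (2 ^ ρ * pnorm (z - w) ^ (-ρ) * b ^ (-(p + q - ρ))) :=
              ENNReal.ofReal_le_ofReal hreal
          _ = _ := by
              rw [ENNReal.ofReal_mul (by positivity), ENNReal.ofReal_mul (by positivity),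
                ENNReal.ofReal_rpow_of_pos hP, ENNReal.ofReal_rpow_of_pos hb0]
    · rw [if_neg hz1]
      simp
  · rw [if_neg hw1]
    simp

/-- Extraction lemma. -/
lemma sker_mul_le {p q ρ : ℝ} (hρ : 0 < ρ) (hp : ρ ≤ p) (hq : ρ ≤ q) (z w u : E) :
    sker p z u * sker q w u ≤
      ENNReal.ofReal (2 ^ ρ) * (ENNReal.ofReal (pnorm (z - w))) ^ (-ρ) *
        (sker (p + q - ρ) z u + sker (p + q - ρ) w u) := by
  rcases eq_or_lt_of_le (pnorm_nonneg (z - w)) with hP | hP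
  · -- z = w
    have hzw : z = w := by
      have := eq_zero_of_pnorm_eq_zero hP.symm
      exact sub_eq_zero.mp this
    subst hzw
    by_cases hz1 : pnorm (z - u) ≤ 1
    · rw [sub_self, pnorm_zero, ENNReal.ofReal_zero, ENNReal.zero_rpow_of_neg (by linarith)]
      have hpos := sker_pos (δ := p + q - ρ) (by linarith) z u hz1
      rw [ENNReal.mul_top (ne_of_gt (ENNReal.ofReal_pos.mpr (by positivity))),
        ENNReal.top_mul (ne_of_gt (lt_of_lt_of_le hpos le_self_add))]
      exact le_top
    · have : sker p z u = 0 := by unfold sker; rw [if_neg hz1]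
      rw [this, zero_mul]
      exact zero_le
  · rcases le_total (pnorm (w - u)) (pnorm (z - u)) with hle | hle
    · refine le_trans (sker_mul_le_aux hρ hp (lt_of_lt_of_le hρ hq) z w u hP hle) ?_
      exact mul_le_mul_right le_add_self _
    · have h2 := sker_mul_le_aux (p := q) (q := p) hρ hq (lt_of_lt_of_le hρ hp) w z u
        (by rwa [pnorm_sub_rev]) hle
      rw [mul_comm (sker p z u)]
      refine le_trans h2 ?_
      rw [pnorm_sub_rev w z, show q + p - ρ = p + q - ρ by ring]
      exact mul_le_mul_right le_self_add _

/-- Product-to-sum bound with one kernel lacking a cutoff. -/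
lemma sker_mul_pker_le {p q : ℝ} (hp : 0 < p) (hq : 0 < q) (x y u : E) :
    sker p x u * (ENNReal.ofReal (pnorm (u - y))) ^ (-q) ≤
      sker (p + q) x u + sker (p + q) y u := by
  by_cases hx1 : pnorm (x - u) ≤ 1
  · set a := pnorm (x - u) with ha
    set b := pnorm (u - y) with hb
    have hbyu : pnorm (y - u) = b := by rw [hb, pnorm_sub_rev]
    rcases eq_or_lt_of_le (pnorm_nonneg (x - u)) with ha0 | ha0
    · -- a = 0: sker (p+q) x u = ⊤
      have ha' : a = 0 := by rw [ha, ← ha0]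
      have : sker (p + q) x u = ⊤ := by
        unfold sker
        rw [if_pos hx1, ← ha, ha', ENNReal.ofReal_zero,
          ENNReal.zero_rpow_of_neg (by linarith)]
      rw [this, top_add]
      exact le_top
    · rcases eq_or_lt_of_le (pnorm_nonneg (u - y)) with hb0 | hb0
      · -- b = 0: sker (p+q) y u = ⊤
        have hb' : b = 0 := by rw [hb, ← hb0]
        have : sker (p + q) y u = ⊤ := by
          unfold sker
          rw [hbyu, hb', if_pos (by norm_num : (0:ℝ) ≤ 1), ENNReal.ofReal_zero,
            ENNReal.zero_rpow_of_neg (by linarith)]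
        rw [this, add_top]
        exact le_top
      · -- 0 < a, 0 < b
        unfold sker
        rw [if_pos hx1]
        rcases le_total a b with hab | hab
        · -- bound by sker (p+q) x u
          refine le_trans ?_ le_self_add
          rw [if_pos hx1]
          calc ENNReal.ofReal a ^ (-p) * ENNReal.ofReal b ^ (-q)
              ≤ ENNReal.ofReal a ^ (-p) * ENNReal.ofReal a ^ (-q) :=
                mul_le_mul_right (rpow_neg_anti (ENNReal.ofReal_le_ofReal hab) hq.le) _
            _ = ENNReal.ofReal a ^ (-(p + q)) := by
                rw [← ENNReal.rpow_add _ _ (ne_of_gt (ENNReal.ofReal_pos.mpr ha0))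
                  ENNReal.ofReal_ne_top]
                congr 1; ring
        · -- b ≤ a ≤ 1 : bound by sker (p+q) y u
          refine le_trans ?_ le_add_self
          rw [if_pos (by rw [hbyu]; linarith : pnorm (y - u) ≤ 1), hbyu]
          calc ENNReal.ofReal a ^ (-p) * ENNReal.ofReal b ^ (-q)
              ≤ ENNReal.ofReal b ^ (-p) * ENNReal.ofReal b ^ (-q) :=
                mul_le_mul_left (rpow_neg_anti (ENNReal.ofReal_le_ofReal hab) hp.le) _
            _ = ENNReal.ofReal b ^ (-(p + q)) := by
                rw [← ENNReal.rpow_add _ _ (ne_of_gt (ENNReal.ofReal_pos.mpr hb0))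
                  ENNReal.ofReal_ne_top]
                congr 1; ring
  · have : sker p x u = 0 := by unfold sker; rw [if_neg hx1]
    rw [this, zero_mul]
    exact zero_le

lemma core {c γ c' : ℝ} (hc0 : 0 < c) (hc5 : c < 5) (hγ0 : 0 < γ) (hγ5 : γ < 5)
    (hc'0 : 0 < c') (hc'5 : c' < 5) (hsum : c + γ + c' < 10) :
    ∃ M : ℝ≥0∞, M < ⊤ ∧ ∀ X Y : E,
      (∫⁻ u : E, ∫⁻ v : E, sker c X u * sker γ u v * sker c' Y v) ≤ M := by
  have hL0 : (0:ℝ) ≤ max (γ + c' - 5) 0 := le_max_right _ _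
  have hR1 : max (γ + c' - 5) 0 < γ := max_lt (by linarith) hγ0
  have hR2 : max (γ + c' - 5) 0 < c' := max_lt (by linarith) hc'0
  have hR3 : max (γ + c' - 5) 0 < 5 - c := max_lt (by linarith) (by linarith)
  set L : ℝ := max (γ + c' - 5) 0 with hLdef
  set R : ℝ := min γ (min c' (5 - c)) with hRdef
  have hLR : L < R := lt_min hR1 (lt_min hR2 hR3)
  set ρ : ℝ := (L + R) / 2 with hρdef
  have hρL : L < ρ := by rw [hρdef]; linarith
  have hρR : ρ < R := by rw [hρdef]; linarith
  have hρ0 : 0 < ρ := lt_of_le_of_lt hL0 hρL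
  have hργ : ρ ≤ γ := le_of_lt (lt_of_lt_of_le hρR (min_le_left _ _))
  have hρc' : ρ ≤ c' :=
    le_of_lt (lt_of_lt_of_le hρR ((min_le_right _ _).trans (min_le_left _ _)))
  have hρ5c : ρ < 5 - c :=
    lt_of_lt_of_le hρR ((min_le_right _ _).trans (min_le_right _ _))
  have hLge : γ + c' - 5 ≤ L := le_max_left _ _
  set d : ℝ := γ + c' - ρ with hd
  have hd0 : 0 < d := by rw [hd]; linarith
  have hd5 : d < 5 := by rw [hd]; linarith
  have hcρ0 : 0 < c + ρ := by linarith
  have hcρ5 : c + ρ < 5 := by linarith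
  refine ⟨ENNReal.ofReal (2 ^ ρ) * (2 * Ibound d) * (2 * Ibound (c + ρ)), ?_, ?_⟩
  · refine ENNReal.mul_lt_top (ENNReal.mul_lt_top ENNReal.ofReal_lt_top ?_) ?_
    · exact ENNReal.mul_lt_top (by norm_num) (Ibound_lt_top hd0 hd5)
    · exact ENNReal.mul_lt_top (by norm_num) (Ibound_lt_top hcρ0 hcρ5)
  · intro X Y
    have hKne : ENNReal.ofReal (2 ^ ρ) * (2 * Ibound d) ≠ ⊤ :=
      ne_of_lt (ENNReal.mul_lt_top ENNReal.ofReal_lt_top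
        (ENNReal.mul_lt_top (by norm_num) (Ibound_lt_top hd0 hd5)))
    have inner : ∀ u : E, (∫⁻ v : E, sker c X u * sker γ u v * sker c' Y v) ≤
        (ENNReal.ofReal (2 ^ ρ) * (2 * Ibound d)) *
          (sker c X u * (ENNReal.ofReal (pnorm (u - Y))) ^ (-ρ)) := by
      intro u
      have hmeas : Measurable fun v : E => sker d u v + sker d Y v :=
        (measurable_sker d u).add (measurable_sker d Y)
      calc ∫⁻ v : E, sker c X u * sker γ u v * sker c' Y v
          ≤ ∫⁻ v : E, (sker c X u *
              (ENNReal.ofReal (2 ^ ρ) * (ENNReal.ofReal (pnorm (u - Y))) ^ (-ρ))) *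
                (sker d u v + sker d Y v) := by
            refine lintegral_mono fun v => ?_
            have h := sker_mul_le hρ0 hργ hρc' u Y v
            calc sker c X u * sker γ u v * sker c' Y v
                = sker c X u * (sker γ u v * sker c' Y v) := by rw [mul_assoc]
              _ ≤ sker c X u * (ENNReal.ofReal (2 ^ ρ) *
                    (ENNReal.ofReal (pnorm (u - Y))) ^ (-ρ) *
                      (sker (γ + c' - ρ) u v + sker (γ + c' - ρ) Y v)) :=
                  mul_le_mul_right h _
              _ = _ := by rw [← hd, ← mul_assoc, ← mul_assoc]
        _ = (sker c X u *
              (ENNReal.ofReal (2 ^ ρ) * (ENNReal.ofReal (pnorm (u - Y))) ^ (-ρ))) *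
                ∫⁻ v : E, (sker d u v + sker d Y v) := lintegral_const_mul _ hmeas
        _ = (sker c X u *
              (ENNReal.ofReal (2 ^ ρ) * (ENNReal.ofReal (pnorm (u - Y))) ^ (-ρ))) *
                (2 * Ibound d) := by
            rw [lintegral_add_left (measurable_sker d u), lintegral_sker, lintegral_sker]
            ring
        _ = (ENNReal.ofReal (2 ^ ρ) * (2 * Ibound d)) *
              (sker c X u * (ENNReal.ofReal (pnorm (u - Y))) ^ (-ρ)) := by ring
    calc ∫⁻ u : E, ∫⁻ v : E, sker c X u * sker γ u v * sker c' Y v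
        ≤ ∫⁻ u : E, (ENNReal.ofReal (2 ^ ρ) * (2 * Ibound d)) *
            (sker c X u * (ENNReal.ofReal (pnorm (u - Y))) ^ (-ρ)) :=
          lintegral_mono inner
      _ = (ENNReal.ofReal (2 ^ ρ) * (2 * Ibound d)) *
            ∫⁻ u : E, sker c X u * (ENNReal.ofReal (pnorm (u - Y))) ^ (-ρ) :=
          lintegral_const_mul' _ _ hKne
      _ ≤ (ENNReal.ofReal (2 ^ ρ) * (2 * Ibound d)) *
            ∫⁻ u : E, (sker (c + ρ) X u + sker (c + ρ) Y u) :=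
          mul_le_mul_right (lintegral_mono fun u => sker_mul_pker_le hc0 hρ0 X Y u) _
      _ = (ENNReal.ofReal (2 ^ ρ) * (2 * Ibound d)) * (2 * Ibound (c + ρ)) := by
          rw [lintegral_add_left (measurable_sker (c + ρ) X), lintegral_sker, lintegral_sker]
          ring
      _ = _ := by rw [mul_assoc]

lemma ofReal_rpow_neg_ne_zero (x : ℝ) {y : ℝ} (hy : 0 < y) :
    ENNReal.ofReal x ^ (-y) ≠ 0 := by
  rcases eq_or_ne (ENNReal.ofReal x) 0 with h | h
  · rw [h, ENNReal.zero_rpow_of_neg (by linarith)]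
    exact ENNReal.top_ne_zero
  · exact ne_of_gt (ENNReal.rpow_pos (pos_iff_ne_zero.mpr h) ENNReal.ofReal_ne_top)

/-- under the stated exponent conditions the iterated integral
`∫∫ ‖z'-u‖^{-α} ‖w'-u‖^{-β} ‖u-v‖^{-γ} ‖z''-v‖^{-α'} ‖w''-v‖^{-β'} du dv`
is bounded by `C ‖z'-w'‖^{-ζ} ‖z''-w''‖^{-η}`. -/
theorem statement7 :
    ∀ α β γ α' β' ζ η : ℝ,
      α ∈ Set.Ioo (0 : ℝ) 5 → β ∈ Set.Ioo (0 : ℝ) 5 → γ ∈ Set.Ioo (0 : ℝ) 5 →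
      α' ∈ Set.Ioo (0 : ℝ) 5 → β' ∈ Set.Ioo (0 : ℝ) 5 →
      ζ ∈ Set.Ioc (0 : ℝ) (min α β) → η ∈ Set.Ioc (0 : ℝ) (min α' β') →
      α + β - 5 < ζ → α' + β' - 5 < η → α + β + α' + β' + γ - 10 < ζ + η →
      ∃ C : ℝ, 0 < C ∧ ∀ z' w' z'' w'' : ℝ × (Fin 3 → ℝ),
        ∫⁻ u, ∫⁻ v, sker α z' u * sker β w' u * sker γ u v * sker α' z'' v * sker β' w'' v
            ∂(volume : Measure (ℝ × (Fin 3 → ℝ))) ∂(volume : Measure (ℝ × (Fin 3 → ℝ))) ≤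
          ENNReal.ofReal C * (ENNReal.ofReal (pnorm (z' - w'))) ^ (-ζ) *
            (ENNReal.ofReal (pnorm (z'' - w''))) ^ (-η) := by
  intro α β γ α' β' ζ η hα hβ hγ hα' hβ' hζ hη h1 h2 h3
  obtain ⟨hα0, hα5⟩ := hα
  obtain ⟨hβ0, hβ5⟩ := hβ
  obtain ⟨hγ0, hγ5⟩ := hγ
  obtain ⟨hα'0, hα'5⟩ := hα'
  obtain ⟨hβ'0, hβ'5⟩ := hβ'
  obtain ⟨hζ0, hζm⟩ := hζ
  obtain ⟨hη0, hηm⟩ := hη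
  have hζα : ζ ≤ α := hζm.trans (min_le_left _ _)
  have hζβ : ζ ≤ β := hζm.trans (min_le_right _ _)
  have hηα : η ≤ α' := hηm.trans (min_le_left _ _)
  have hηβ : η ≤ β' := hηm.trans (min_le_right _ _)
  have hc0 : 0 < α + β - ζ := by linarith
  have hc5 : α + β - ζ < 5 := by linarith
  have hc'0 : 0 < α' + β' - η := by linarith
  have hc'5 : α' + β' - η < 5 := by linarith
  have hsum : (α + β - ζ) + γ + (α' + β' - η) < 10 := by linarith
  obtain ⟨M, hMlt, hM⟩ := core hc0 hc5 hγ0 hγ5 hc'0 hc'5 hsum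
  refine ⟨2 ^ ζ * 2 ^ η * 4 * M.toReal + 1, by positivity, ?_⟩
  intro z' w' z'' w''
  rcases eq_or_lt_of_le (pnorm_nonneg (z' - w')) with hP' | hP'
  · rw [← hP', ENNReal.ofReal_zero, ENNReal.zero_rpow_of_neg (by linarith)]
    rw [ENNReal.mul_top (ne_of_gt (ENNReal.ofReal_pos.mpr (by positivity))),
      ENNReal.top_mul (ofReal_rpow_neg_ne_zero _ hη0)]
    exact le_top
  rcases eq_or_lt_of_le (pnorm_nonneg (z'' - w'')) with hP'' | hP'' 
  · rw [← hP'', ENNReal.ofReal_zero, ENNReal.zero_rpow_of_neg (by linarith)]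
    rw [ENNReal.mul_top (mul_ne_zero (ne_of_gt (ENNReal.ofReal_pos.mpr (by positivity)))
      (ofReal_rpow_neg_ne_zero _ hζ0))]
    exact le_top
  -- main case
  have hP'ne : (ENNReal.ofReal (pnorm (z' - w'))) ^ (-ζ) ≠ ⊤ := by
    rw [ENNReal.ofReal_rpow_of_pos hP']; exact ENNReal.ofReal_ne_top
  have hP''ne : (ENNReal.ofReal (pnorm (z'' - w''))) ^ (-η) ≠ ⊤ := by
    rw [ENNReal.ofReal_rpow_of_pos hP'']; exact ENNReal.ofReal_ne_top
  set C0 : ℝ≥0∞ := ENNReal.ofReal (2 ^ ζ) * (ENNReal.ofReal (pnorm (z' - w'))) ^ (-ζ) *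
      (ENNReal.ofReal (2 ^ η) * (ENNReal.ofReal (pnorm (z'' - w''))) ^ (-η)) with hC0
  have hC0ne : C0 ≠ ⊤ := by
    rw [hC0]
    exact ENNReal.mul_ne_top (ENNReal.mul_ne_top ENNReal.ofReal_ne_top hP'ne)
      (ENNReal.mul_ne_top ENNReal.ofReal_ne_top hP''ne)
  -- pointwise bound
  have hpt : ∀ u v : E,
      sker α z' u * sker β w' u * sker γ u v * sker α' z'' v * sker β' w'' v ≤
        C0 * (sker (α + β - ζ) z' u * sker γ u v * sker (α' + β' - η) z'' v +
              sker (α + β - ζ) z' u * sker γ u v * sker (α' + β' - η) w'' v +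
              sker (α + β - ζ) w' u * sker γ u v * sker (α' + β' - η) z'' v +
              sker (α + β - ζ) w' u * sker γ u v * sker (α' + β' - η) w'' v) := by
    intro u v
    have e0 : sker α z' u * sker β w' u * sker γ u v * sker α' z'' v * sker β' w'' v =
        sker α z' u * sker β w' u * sker γ u v * (sker α' z'' v * sker β' w'' v) := by
      rw [mul_assoc]
    rw [e0]
    have step : sker α z' u * sker β w' u * sker γ u v * (sker α' z'' v * sker β' w'' v) ≤
        (ENNReal.ofReal (2 ^ ζ) * (ENNReal.ofReal (pnorm (z' - w'))) ^ (-ζ) *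
          (sker (α + β - ζ) z' u + sker (α + β - ζ) w' u)) * sker γ u v *
        (ENNReal.ofReal (2 ^ η) * (ENNReal.ofReal (pnorm (z'' - w''))) ^ (-η) *
          (sker (α' + β' - η) z'' v + sker (α' + β' - η) w'' v)) := by
      refine mul_le_mul' (mul_le_mul' ?_ (le_refl _)) ?_
      · exact sker_mul_le hζ0 hζα hζβ z' w' u
      · exact sker_mul_le hη0 hηα hηβ z'' w'' v
    refine le_trans step (le_of_eq ?_)
    rw [hC0]
    ring
  -- measurability of the four summands
  have hmeasv : ∀ (cc cc' : ℝ) (X Y u : E),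
      Measurable fun v : E => sker cc X u * sker γ u v * sker cc' Y v := by
    intro cc cc' X Y u
    exact (measurable_const.mul (measurable_sker γ u)).mul (measurable_sker cc' Y)
  have hmeasu : ∀ (cc cc' : ℝ) (X Y : E),
      Measurable fun u : E => ∫⁻ v : E, sker cc X u * sker γ u v * sker cc' Y v := by
    intro cc cc' X Y
    refine Measurable.lintegral_prod_right ?_
    exact (((measurable_sker cc X).comp measurable_fst).mul (measurable_sker2 γ)).mul
      ((measurable_sker cc' Y).comp measurable_snd)
  calc ∫⁻ u : E, ∫⁻ v : E,
        sker α z' u * sker β w' u * sker γ u v * sker α' z'' v * sker β' w'' v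
      ≤ ∫⁻ u : E, ∫⁻ v : E, C0 *
          (sker (α + β - ζ) z' u * sker γ u v * sker (α' + β' - η) z'' v +
           sker (α + β - ζ) z' u * sker γ u v * sker (α' + β' - η) w'' v +
           sker (α + β - ζ) w' u * sker γ u v * sker (α' + β' - η) z'' v +
           sker (α + β - ζ) w' u * sker γ u v * sker (α' + β' - η) w'' v) :=
        lintegral_mono fun u => lintegral_mono fun v => hpt u v
    _ = C0 * ∫⁻ u : E, ∫⁻ v : E,
          (sker (α + β - ζ) z' u * sker γ u v * sker (α' + β' - η) z'' v +
           sker (α + β - ζ) z' u * sker γ u v * sker (α' + β' - η) w'' v +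
           sker (α + β - ζ) w' u * sker γ u v * sker (α' + β' - η) z'' v +
           sker (α + β - ζ) w' u * sker γ u v * sker (α' + β' - η) w'' v) := by
        simp_rw [lintegral_const_mul' C0 _ hC0ne]
    _ = C0 * ∫⁻ u : E,
          ((∫⁻ v : E, sker (α + β - ζ) z' u * sker γ u v * sker (α' + β' - η) z'' v) +
           (∫⁻ v : E, sker (α + β - ζ) z' u * sker γ u v * sker (α' + β' - η) w'' v) +
           (∫⁻ v : E, sker (α + β - ζ) w' u * sker γ u v * sker (α' + β' - η) z'' v) +
           (∫⁻ v : E, sker (α + β - ζ) w' u * sker γ u v * sker (α' + β' - η) w'' v)) := by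
        congr 1
        refine lintegral_congr fun u => ?_
        rw [lintegral_add_left ((hmeasv _ _ z' z'' u).fun_add (hmeasv _ _ z' w'' u) |>.fun_add
            (hmeasv _ _ w' z'' u)),
          lintegral_add_left ((hmeasv _ _ z' z'' u).fun_add (hmeasv _ _ z' w'' u)),
          lintegral_add_left (hmeasv _ _ z' z'' u)]
    _ = C0 *
          ((∫⁻ u : E, ∫⁻ v : E, sker (α + β - ζ) z' u * sker γ u v * sker (α' + β' - η) z'' v) +
           (∫⁻ u : E, ∫⁻ v : E, sker (α + β - ζ) z' u * sker γ u v * sker (α' + β' - η) w'' v) +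
           (∫⁻ u : E, ∫⁻ v : E, sker (α + β - ζ) w' u * sker γ u v * sker (α' + β' - η) z'' v) +
           (∫⁻ u : E, ∫⁻ v : E, sker (α + β - ζ) w' u * sker γ u v * sker (α' + β' - η) w'' v)) := by
        congr 1
        rw [lintegral_add_left ((hmeasu _ _ z' z'').fun_add (hmeasu _ _ z' w'') |>.fun_add
            (hmeasu _ _ w' z'')),
          lintegral_add_left ((hmeasu _ _ z' z'').fun_add (hmeasu _ _ z' w'')),
          lintegral_add_left (hmeasu _ _ z' z'')]
    _ ≤ C0 * (M + M + M + M) := by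
        refine mul_le_mul_right ?_ _
        exact add_le_add (add_le_add (add_le_add (hM z' z'') (hM z' w'')) (hM w' z''))
          (hM w' w'')
    _ = (ENNReal.ofReal (2 ^ ζ) * ENNReal.ofReal (2 ^ η) * (M + M + M + M)) *
          ((ENNReal.ofReal (pnorm (z' - w'))) ^ (-ζ) *
            (ENNReal.ofReal (pnorm (z'' - w''))) ^ (-η)) := by
        rw [hC0]; ring
    _ ≤ ENNReal.ofReal (2 ^ ζ * 2 ^ η * 4 * M.toReal + 1) *
          ((ENNReal.ofReal (pnorm (z' - w'))) ^ (-ζ) *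
            (ENNReal.ofReal (pnorm (z'' - w''))) ^ (-η)) := by
        refine mul_le_mul_left ?_ _
        have hMM : M + M + M + M = 4 * M := by ring
        rw [hMM]
        have h4 : ENNReal.ofReal (2 ^ ζ) * ENNReal.ofReal (2 ^ η) * (4 * M) =
            ENNReal.ofReal (2 ^ ζ * 2 ^ η * 4 * M.toReal) := by
          rw [ENNReal.ofReal_mul (by positivity), ENNReal.ofReal_mul (by positivity),
            ENNReal.ofReal_mul (by positivity), ENNReal.ofReal_toReal hMlt.ne]
          norm_num
          ring
        rw [h4]
        exact ENNReal.ofReal_le_ofReal (by linarith)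
    _ = ENNReal.ofReal (2 ^ ζ * 2 ^ η * 4 * M.toReal + 1) *
          (ENNReal.ofReal (pnorm (z' - w'))) ^ (-ζ) *
          (ENNReal.ofReal (pnorm (z'' - w''))) ^ (-η) := by rw [← mul_assoc]
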